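/- Let u ∈ ℝ with 0 < |u| < 1 and let (v_M) be a sequence of complex numbers with v_M = u² + O(M^{−1/2}). Then lim_{M→∞} e^{−2M v_M} · e_M(2M v_M) = 1, where e_M(γ) = Σ_{m=0}^{2M−2} γ^m/m!. -/

import Mathlib

open Filter BigOperators
set_option maxHeartbeats 1000000

private lemma sqrt_nat_atTop : Tendsto (fun M : ℕ => Real.sqrt M) atTop atTop := by
  refine tendsto_atTop_atTop.2 fun b => ?_
  obtain ⟨n, hn⟩ := exists_nat_ge (b ^ 2)
  refine ⟨n, fun m hm => ?_⟩
  calc b ≤ |b| := le_abs_self b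
    _ = Real.sqrt (b ^ 2) := (Real.sqrt_sq_eq_abs b).symm
    _ ≤ Real.sqrt m := Real.sqrt_le_sqrt (hn.trans (by exact_mod_cast hm))

private lemma te_mono {t b : ℝ} (ht : 0 ≤ t) (htb : t ≤ b) (hb : b ≤ 1) :
    t * Real.exp (1 - t) ≤ b * Real.exp (1 - b) := by
  have h1 : (t - b) + 1 ≤ Real.exp (t - b) := Real.add_one_le_exp _
  have hbt : t ≤ b * Real.exp (t - b) := by nlinarith [Real.exp_pos (t - b)]
  calc t * Real.exp (1 - t) ≤ (b * Real.exp (t - b)) * Real.exp (1 - t) :=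
        mul_le_mul_of_nonneg_right hbt (Real.exp_pos _).le
    _ = b * Real.exp (1 - b) := by
        rw [mul_assoc, ← Real.exp_add]; ring_nf

private lemma poisson_bound {x b : ℝ} {N : ℕ} (hx : 0 ≤ x) (hb : b ≤ 1)
    (hxb : x ≤ b * N) (hN : 1 ≤ N) :
    Real.exp (-x) * (x ^ N / (N.factorial : ℝ)) ≤ (b * Real.exp (1 - b)) ^ N := by
  have hNpos : (0 : ℝ) < N := by exact_mod_cast hN
  have hfact : (N : ℝ) ^ N / (N.factorial : ℝ) ≤ Real.exp N := by
    refine le_trans ?_ (Real.sum_le_exp_of_nonneg hNpos.le (N + 1))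
    have := Finset.single_le_sum (f := fun i => (N : ℝ) ^ i / (i.factorial : ℝ))
      (fun i _ => by positivity) (Finset.self_mem_range_succ N)
    simpa using this
  have hfac_pos : (0 : ℝ) < (N.factorial : ℝ) := by exact_mod_cast N.factorial_pos
  have h1 : x ^ N / (N.factorial : ℝ) ≤ x ^ N * Real.exp N / (N : ℝ) ^ N := by
    rw [div_le_div_iff₀ hfac_pos (by positivity)]
    have : (N : ℝ) ^ N ≤ (N.factorial : ℝ) * Real.exp N := by
      rw [div_le_iff₀ hfac_pos] at hfact; linarith [hfact]
    calc x ^ N * (N : ℝ) ^ N ≤ x ^ N * ((N.factorial : ℝ) * Real.exp N) := by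
          exact mul_le_mul_of_nonneg_left this (by positivity)
      _ = x ^ N * Real.exp N * (N.factorial : ℝ) := by ring
  have key : Real.exp (-x) * (x ^ N * Real.exp N / (N : ℝ) ^ N)
      = ((x / N) * Real.exp (1 - x / N)) ^ N := by
    have hE : Real.exp (1 - x / N) ^ N = Real.exp N * Real.exp (-x) := by
      rw [← Real.exp_nat_mul, show (N : ℝ) * (1 - x / N) = N + -x by field_simp; ring,
        Real.exp_add]
    rw [mul_pow, div_pow, hE]
    ring
  have ht0 : 0 ≤ x / N := by positivity
  have htb : x / N ≤ b := by rw [div_le_iff₀ hNpos]; linarith [hxb]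
  calc Real.exp (-x) * (x ^ N / (N.factorial : ℝ))
      ≤ Real.exp (-x) * (x ^ N * Real.exp N / (N : ℝ) ^ N) :=
        mul_le_mul_of_nonneg_left h1 (Real.exp_pos _).le
    _ = ((x / N) * Real.exp (1 - x / N)) ^ N := key
    _ ≤ (b * Real.exp (1 - b)) ^ N := by
        apply pow_le_pow_left₀ (by positivity)
        exact te_mono ht0 htb hb

private lemma tail_bound (γ : ℂ) (N : ℕ) (b : ℝ) (hb0 : 0 ≤ b) (hb : b < 1)
    (hN : 1 ≤ N) (hγ : ‖γ‖ ≤ b * N) :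
    ‖Complex.exp γ - ∑ m ∈ Finset.range N, γ ^ m / (m.factorial : ℂ)‖ ≤
      ‖γ‖ ^ N / (N.factorial : ℝ) * (1 - b)⁻¹ := by
  have hNpos : (0 : ℝ) < N := by exact_mod_cast hN
  have hsum : Summable (fun m : ℕ => γ ^ m / (m.factorial : ℂ)) := NormedSpace.expSeries_div_summable γ
  have hexp : Complex.exp γ = ∑' m : ℕ, γ ^ m / (m.factorial : ℂ) := by
    rw [Complex.exp_eq_exp_ℂ, NormedSpace.exp_eq_tsum_div]
  have htail := hsum.sum_add_tsum_nat_add N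
  have hEq : Complex.exp γ - ∑ m ∈ Finset.range N, γ ^ m / (m.factorial : ℂ)
      = ∑' i : ℕ, γ ^ (i + N) / ((i + N).factorial : ℂ) := by
    rw [hexp, ← htail]; ring
  -- termwise bound
  have hterm : ∀ i : ℕ, ‖γ ^ (i + N) / ((i + N).factorial : ℂ)‖ ≤
      ‖γ‖ ^ N / (N.factorial : ℝ) * b ^ i := by
    intro i
    have hfac : (N.factorial : ℝ) * (N : ℝ) ^ i ≤ ((i + N).factorial : ℝ) := by
      have h1 : N.factorial * N ^ i ≤ N.factorial * (N + 1) ^ i :=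
        Nat.mul_le_mul_left _ (Nat.pow_le_pow_left (Nat.le_succ N) i)
      have h2 : N.factorial * (N + 1) ^ i ≤ (N + i).factorial :=
        Nat.factorial_mul_pow_le_factorial
      have := h1.trans h2
      rw [Nat.add_comm N i] at this
      exact_mod_cast this
    have hnorm : ‖γ ^ (i + N) / ((i + N).factorial : ℂ)‖
        = ‖γ‖ ^ (i + N) / (((i + N).factorial : ℕ) : ℝ) := by
      rw [norm_div, norm_pow]
      norm_num
    rw [hnorm]
    have hfac_pos : (0 : ℝ) < (((i + N).factorial : ℕ) : ℝ) := by
      exact_mod_cast (i + N).factorial_pos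
    have hfacN_pos : (0 : ℝ) < (N.factorial : ℝ) := by exact_mod_cast N.factorial_pos
    rw [div_le_iff₀ hfac_pos]
    have hγi : ‖γ‖ ^ i ≤ (b * N) ^ i := pow_le_pow_left₀ (norm_nonneg _) hγ i
    calc ‖γ‖ ^ (i + N) = ‖γ‖ ^ N * ‖γ‖ ^ i := by rw [← pow_add, Nat.add_comm]
      _ ≤ ‖γ‖ ^ N * (b * N) ^ i :=
          mul_le_mul_of_nonneg_left hγi (by positivity)
      _ = ‖γ‖ ^ N / (N.factorial : ℝ) * b ^ i * ((N.factorial : ℝ) * (N : ℝ) ^ i) := by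
          rw [mul_pow]; field_simp
      _ ≤ ‖γ‖ ^ N / (N.factorial : ℝ) * b ^ i * (((i + N).factorial : ℕ) : ℝ) := by
          apply mul_le_mul_of_nonneg_left hfac
          positivity
  have hsum_norm : Summable (fun i : ℕ => ‖γ ^ (i + N) / ((i + N).factorial : ℂ)‖) := by
    have := NormedSpace.norm_expSeries_div_summable γ
    exact ((summable_nat_add_iff N).2 this)
  have hgeo : Summable (fun i : ℕ => ‖γ‖ ^ N / (N.factorial : ℝ) * b ^ i) :=
    (summable_geometric_of_lt_one hb0 hb).mul_left _
  calc ‖Complex.exp γ - ∑ m ∈ Finset.range N, γ ^ m / (m.factorial : ℂ)‖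
      = ‖∑' i : ℕ, γ ^ (i + N) / ((i + N).factorial : ℂ)‖ := by rw [hEq]
    _ ≤ ∑' i : ℕ, ‖γ ^ (i + N) / ((i + N).factorial : ℂ)‖ := norm_tsum_le_tsum_norm hsum_norm
    _ ≤ ∑' i : ℕ, ‖γ‖ ^ N / (N.factorial : ℝ) * b ^ i := Summable.tsum_le_tsum hterm hsum_norm hgeo
    _ = ‖γ‖ ^ N / (N.factorial : ℝ) * (1 - b)⁻¹ := by
        rw [tsum_mul_left, tsum_geometric_of_lt_one hb0 hb]

private lemma decay (c ρ : ℝ) (hρ0 : 0 < ρ) (hρ1 : ρ < 1) :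
    Tendsto (fun M : ℕ => Real.exp (c * Real.sqrt M) * ρ ^ (2 * M - 1)) atTop (nhds 0) := by
  have hlog : Real.log ρ < 0 := Real.log_neg hρ0 hρ1
  have hexpo : Tendsto (fun M : ℕ => Real.sqrt M * (c + Real.log ρ * Real.sqrt M))
      atTop atBot := by
    apply Filter.Tendsto.atTop_mul_atBot₀ sqrt_nat_atTop
    have h1 : Tendsto (fun M : ℕ => Real.log ρ * Real.sqrt M) atTop atBot := by
      have := sqrt_nat_atTop.atTop_mul_const_of_neg hlog
      simpa [mul_comm] using this
    simpa using tendsto_atBot_add_const_left atTop c h1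
  have h0 : Tendsto (fun M : ℕ =>
      Real.exp (Real.sqrt M * (c + Real.log ρ * Real.sqrt M))) atTop (nhds 0) :=
    Real.tendsto_exp_atBot.comp hexpo
  apply squeeze_zero' ?_ ?_ h0
  · filter_upwards with M; positivity
  · filter_upwards [eventually_ge_atTop 1] with M hM
    have hMR : Real.sqrt M * Real.sqrt M = (M : ℝ) := Real.mul_self_sqrt (Nat.cast_nonneg M)
    have hρpow : ρ ^ (2 * M - 1) = Real.exp (((2 * M - 1 : ℕ) : ℝ) * Real.log ρ) := by
      rw [Real.exp_nat_mul, Real.exp_log hρ0]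
    rw [hρpow, ← Real.exp_add]
    apply Real.exp_le_exp.2
    have hle : (M : ℝ) ≤ ((2 * M - 1 : ℕ) : ℝ) := by
      have : M ≤ 2 * M - 1 := by omega
      exact_mod_cast this
    have : ((2 * M - 1 : ℕ) : ℝ) * Real.log ρ ≤ (M : ℝ) * Real.log ρ :=
      mul_le_mul_of_nonpos_right hle hlog.le
    nlinarith [this, hMR]


/-- Partial sum of the exponential series up to degree `2M − 2`. -/
noncomputable def eTaylor (M : ℕ) (γ : ℂ) : ℂ :=
  ∑ m ∈ Finset.range (2 * M - 1), γ ^ m / (m.factorial : ℂ)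

/-- If `u` is real with `0 < |u| < 1` and `v_M = u² + O(M^{−1/2})`, then
`e^{−2M v_M} e_M(2M v_M) → 1` as `M → ∞`. -/
theorem eTaylor_bulk_limit (u : ℝ) (hu0 : 0 < |u|) (hu1 : |u| < 1)
    (v : ℕ → ℂ)
    (hv : ∃ C : ℝ, ∃ M₀ : ℕ, ∀ M ≥ M₀,
      ‖v M - (u : ℂ) ^ 2‖ ≤ C / Real.sqrt M) :
    Tendsto (fun M : ℕ =>
        Complex.exp (-(2 * (M : ℂ) * v M)) * eTaylor M (2 * (M : ℂ) * v M))
      atTop (nhds 1) := by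
  obtain ⟨C₀, M₀, hC₀⟩ := hv
  set C : ℝ := |C₀| with hCdef
  have hC0 : 0 ≤ C := abs_nonneg _
  set a : ℝ := u ^ 2 with hadef
  have ha0 : 0 < a := by
    have hune : u ≠ 0 := abs_pos.mp hu0
    positivity
  have ha1 : a < 1 := by
    rw [hadef, ← sq_abs]
    nlinarith [abs_nonneg u]
  set b : ℝ := (1 + a) / 2 with hbdef
  have hab : a < b := by simp only [hbdef]; linarith
  have hb1 : b < 1 := by simp only [hbdef]; linarith
  have hb0 : 0 < b := by simp only [hbdef]; linarith
  set ρ : ℝ := b * Real.exp (1 - b) with hρdef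
  have hρ0 : 0 < ρ := by positivity
  have hρ1 : ρ < 1 := by
    have h1 : b - 1 + 1 < Real.exp (b - 1) := Real.add_one_lt_exp (by intro h; linarith [sub_eq_zero.mp h])
    have h2 : b < Real.exp (b - 1) := by linarith
    have h3 : ρ < Real.exp (b - 1) * Real.exp (1 - b) :=
      mul_lt_mul_of_pos_right h2 (Real.exp_pos _)
    rwa [← Real.exp_add, show b - 1 + (1 - b) = 0 by ring, Real.exp_zero] at h3
  -- the bound sequence
  have hbound : Tendsto (fun M : ℕ =>
      (1 - b)⁻¹ * (Real.exp ((4 * C) * Real.sqrt M) * ρ ^ (2 * M - 1))) atTop (nhds 0) := by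
    have := (decay (4 * C) ρ hρ0 hρ1).const_mul (1 - b)⁻¹
    simpa using this
  rw [← tendsto_sub_nhds_zero_iff]
  apply squeeze_zero_norm' ?_ hbound
  -- eventual inequality
  have ev3 : ∀ᶠ M : ℕ in atTop, 2 * C * Real.sqrt M + b ≤ 2 * M * (b - a) := by
    have hT : Tendsto (fun M : ℕ =>
        Real.sqrt M * (2 * (b - a) * Real.sqrt M - 2 * C)) atTop atTop := by
      apply sqrt_nat_atTop.atTop_mul_atTop₀
      exact tendsto_atTop_add_const_right _ (-(2 * C))
        (sqrt_nat_atTop.const_mul_atTop (by linarith : (0:ℝ) < 2 * (b - a)))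
    filter_upwards [hT.eventually_ge_atTop b] with M hM
    have hMR : Real.sqrt M * Real.sqrt M = (M : ℝ) := Real.mul_self_sqrt (Nat.cast_nonneg M)
    nlinarith [hM, hMR]
  filter_upwards [eventually_ge_atTop M₀, eventually_ge_atTop 1, ev3] with M hM₀ hM1 hE
  set γ : ℂ := 2 * (M : ℂ) * v M with hγdef
  set N : ℕ := 2 * M - 1 with hNdef
  have hN1 : 1 ≤ N := by omega
  have hNcast : ((N : ℕ) : ℝ) = 2 * (M : ℝ) - 1 := by
    rw [hNdef, Nat.cast_sub (by omega)]; push_cast; ring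
  have hMpos : (0 : ℝ) < M := by exact_mod_cast hM1
  have hsqpos : 0 < Real.sqrt M := Real.sqrt_pos.2 hMpos
  have hsqM : Real.sqrt M * Real.sqrt M = (M : ℝ) := Real.mul_self_sqrt hMpos.le
  -- the O(M^{-1/2}) hypothesis with nonnegative constant
  have hv' : ‖v M - (a : ℂ)‖ ≤ C / Real.sqrt M := by
    have h1 := hC₀ M hM₀
    have h2 : C₀ / Real.sqrt M ≤ C / Real.sqrt M := by
      gcongr
      · exact le_abs_self C₀
    have h3 : (u : ℂ) ^ 2 = ((a : ℝ) : ℂ) := by rw [hadef]; push_cast; ring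
    rw [← h3]
    calc ‖v M - (u : ℂ) ^ 2‖ = ‖v M - (u : ℂ) ^ 2‖ := rfl
      _ ≤ C₀ / Real.sqrt M := h1
      _ ≤ C / Real.sqrt M := h2
  -- norm bound for γ
  have hnγ : ‖γ‖ = 2 * (M : ℝ) * ‖v M‖ := by
    rw [hγdef, norm_mul, norm_mul]
    simp
  have hvub : ‖v M‖ ≤ a + C / Real.sqrt M := by
    calc ‖v M‖ = ‖(a : ℂ) + (v M - (a : ℂ))‖ := by ring_nf
      _ ≤ ‖((a : ℝ) : ℂ)‖ + ‖v M - (a : ℂ)‖ := norm_add_le _ _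
      _ = a + ‖v M - (a : ℂ)‖ := by
          rw [Complex.norm_real, Real.norm_eq_abs, abs_of_pos ha0]
      _ ≤ a + C / Real.sqrt M := by linarith [hv']
  have hMdiv : 2 * (M : ℝ) * (C / Real.sqrt M) = 2 * C * Real.sqrt M := by
    field_simp
    linear_combination (-1 : ℝ) * C * hsqM
  have hxle : ‖γ‖ ≤ 2 * (M : ℝ) * a + 2 * C * Real.sqrt M := by
    rw [hnγ, ← hMdiv]
    nlinarith [hvub, hMpos]
  have hxbN : ‖γ‖ ≤ b * (N : ℝ) := by
    rw [hNcast]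
    nlinarith [hxle, hE]
  -- real part bound
  have hrevM : a - C / Real.sqrt M ≤ (v M).re := by
    have h1 : |(v M - (a : ℂ)).re| ≤ ‖v M - (a : ℂ)‖ := Complex.abs_re_le_norm _
    have h2 : (v M - (a : ℂ)).re = (v M).re - a := by simp
    rw [h2] at h1
    have := (abs_le.mp h1).1
    linarith [hv', this]
  have hre : 2 * (M : ℝ) * a - 2 * C * Real.sqrt M ≤ γ.re := by
    have h1 : γ.re = 2 * (M : ℝ) * (v M).re := by
      rw [hγdef]; simp [Complex.mul_re]
    rw [h1, ← hMdiv]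
    nlinarith [hrevM, hMpos]
  -- assemble
  have hinv : Complex.exp (-γ) * Complex.exp γ = 1 := by
    rw [← Complex.exp_add]; simp
  have hdiff : Complex.exp (-γ) * eTaylor M γ - 1
      = Complex.exp (-γ) * (eTaylor M γ - Complex.exp γ) := by
    rw [mul_sub, hinv]
  have hSdef : eTaylor M γ = ∑ m ∈ Finset.range N, γ ^ m / (m.factorial : ℂ) := rfl
  have htail := tail_bound γ N b hb0.le hb1 hN1 hxbN
  have hb1' : (0 : ℝ) < 1 - b := by linarith
  have hexp_split : Real.exp (-γ.re) ≤ Real.exp (4 * C * Real.sqrt M) * Real.exp (-‖γ‖) := by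
    rw [← Real.exp_add]
    apply Real.exp_le_exp.2
    linarith [hre, hxle]
  have hpois := poisson_bound (norm_nonneg γ) hb1.le hxbN hN1
  calc ‖Complex.exp (-γ) * eTaylor M γ - 1‖
      = Real.exp (-γ.re) * ‖Complex.exp γ - ∑ m ∈ Finset.range N, γ ^ m / (m.factorial : ℂ)‖ := by
        rw [hdiff, norm_mul, norm_sub_rev, ← hSdef]
        congr 1
        rw [Complex.norm_exp, Complex.neg_re]
    _ ≤ Real.exp (-γ.re) * (‖γ‖ ^ N / (N.factorial : ℝ) * (1 - b)⁻¹) :=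
        mul_le_mul_of_nonneg_left htail (Real.exp_pos _).le
    _ ≤ (Real.exp (4 * C * Real.sqrt M) * Real.exp (-‖γ‖)) *
          (‖γ‖ ^ N / (N.factorial : ℝ) * (1 - b)⁻¹) := by
        apply mul_le_mul_of_nonneg_right hexp_split
        positivity
    _ = Real.exp (4 * C * Real.sqrt M) *
          (Real.exp (-‖γ‖) * (‖γ‖ ^ N / (N.factorial : ℝ))) * (1 - b)⁻¹ := by ring
    _ ≤ Real.exp (4 * C * Real.sqrt M) * ρ ^ N * (1 - b)⁻¹ := by
        apply mul_le_mul_of_nonneg_right ?_ (by positivity)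
        exact mul_le_mul_of_nonneg_left hpois (Real.exp_pos _).le
    _ = (1 - b)⁻¹ * (Real.exp ((4 * C) * Real.sqrt M) * ρ ^ (2 * M - 1)) := by
        rw [hNdef]; ring
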